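/- Let Λ⁰ be a countable set partitioned as Λ⁰ = (Λ⁰ \ H) ⊔ H where H is hereditary for a row-finite 2-graph Λ with no sources (so each adjacency matrix has block-upper-triangular form A_i = [[B_i, *],[0, A_{H,i}]] with respect to this partition). Suppose: (a) the quotient graph satisfies the matrix condition, i.e. {(1 − B₁^t)f + (1 − B₂^t)g : f, g ∈ ℤ(Λ⁰ \ H)} ∩ ℕ(Λ⁰ \ H) = {0}; (b) HΛ satisfies the matrix condition; and (c) ker(ι̃) ∩ [ℕH + im(1 − A_{H,1}^t, 1 − A_{H,2}^t)]/im(1 − A_{H,1}^t, 1 − A_{H,2}^t) = {0}, where ι̃ is the induced map on cokernels. Then Λ satisfies the matrix condition: {(1 − A₁^t)f + (1 − A₂^t)g : f, g ∈ ℤΛ⁰} ∩ ℕΛ⁰ = {0}. -/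

import Mathlib

/-- A `2`-graph: a countable category (objects `V`, paths `P`, range `r`, source `s`,
composition `comp`, identities `vert`) with a degree functor `d : P → ℕ × ℕ` having the
unique factorisation property, which is row-finite and has no sources. -/
structure TwoGraph where
  V : Type
  P : Type
  countV : Countable V
  countP : Countable P
  r : P → V
  s : P → V
  d : P → ℕ × ℕ
  vert : V → P
  comp : ∀ μ ν : P, s μ = r ν → P
  r_vert : ∀ v, r (vert v) = v
  s_vert : ∀ v, s (vert v) = v
  d_vert : ∀ v, d (vert v) = 0
  r_comp : ∀ (μ ν : P) (h : s μ = r ν), r (comp μ ν h) = r μ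
  s_comp : ∀ (μ ν : P) (h : s μ = r ν), s (comp μ ν h) = s ν
  d_comp : ∀ (μ ν : P) (h : s μ = r ν), d (comp μ ν h) = d μ + d ν
  id_comp : ∀ μ : P, comp (vert (r μ)) μ (s_vert (r μ)) = μ
  comp_id : ∀ μ : P, comp μ (vert (s μ)) ((r_vert (s μ)).symm) = μ
  assoc : ∀ (μ ν ρ : P) (h₁ : s μ = r ν) (h₂ : s ν = r ρ),
    comp (comp μ ν h₁) ρ ((s_comp μ ν h₁).trans h₂) =
      comp μ (comp ν ρ h₂) (h₁.trans (r_comp ν ρ h₂).symm)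
  factor : ∀ (p : P) (m n : ℕ × ℕ), d p = m + n →
    ∃! q : P × P, ∃ h : s q.1 = r q.2, d q.1 = m ∧ d q.2 = n ∧ comp q.1 q.2 h = p
  rowFinite : ∀ (v : V) (n : ℕ × ℕ), {p : P | r p = v ∧ d p = n}.Finite
  noSources : ∀ (v : V) (n : ℕ × ℕ), {p : P | r p = v ∧ d p = n}.Nonempty

/-- The adjacency count of paths of degree `e` with range `v` and source `w`;
for `e = (1,0)` this is `A₁(v,w)` and for `e = (0,1)` it is `A₂(v,w)`. -/
noncomputable def TwoGraph.adj (Λ : TwoGraph) (e : ℕ × ℕ) (v w : Λ.V) : ℕ :=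
  Nat.card {p : Λ.P // Λ.r p = v ∧ Λ.s p = w ∧ Λ.d p = e}

/-- The transposed adjacency matrix of degree `e`, acting on integer-valued functions
on vertices: `(A_e^t f)(v) = ∑_w A_e(w,v) f(w)`. -/
noncomputable def TwoGraph.Tt (Λ : TwoGraph) (e : ℕ × ℕ) (f : Λ.V → ℤ) : Λ.V → ℤ :=
  fun v => ∑ᶠ w : Λ.V, (Λ.adj e w v : ℤ) * f w

open Classical in
/-- The transpose of the `S × S` corner of the adjacency matrix of degree `e`
(the adjacency matrix of the subgraph on the vertex set `S`), acting on
integer-valued functions and extended by zero off `S`. -/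
noncomputable def TwoGraph.TtOn (Λ : TwoGraph) (S : Set Λ.V) (e : ℕ × ℕ) (f : Λ.V → ℤ) :
    Λ.V → ℤ :=
  fun v => if v ∈ S then ∑ᶠ w ∈ S, (Λ.adj e w v : ℤ) * f w else 0

/-- The matrix condition (M) for a `2`-graph `Λ`. -/
def MatrixCondition (Λ : TwoGraph) : Prop :=
  ∀ f : Λ.V → ℤ, (Function.support f).Finite → (∀ v, 0 ≤ f v) →
    (∃ g h : Λ.V → ℤ, (Function.support g).Finite ∧ (Function.support h).Finite ∧
      ∀ v, f v = (g v - Λ.Tt (1, 0) g v) + (h v - Λ.Tt (0, 1) h v)) →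
    f = 0

/-- The matrix condition for the subgraph on the vertex set `S`. -/
def MatrixConditionOn (Λ : TwoGraph) (S : Set Λ.V) : Prop :=
  ∀ f : Λ.V → ℤ, (Function.support f).Finite → Function.support f ⊆ S → (∀ v, 0 ≤ f v) →
    (∃ g h : Λ.V → ℤ, (Function.support g).Finite ∧ Function.support g ⊆ S ∧
      (Function.support h).Finite ∧ Function.support h ⊆ S ∧
      ∀ v, f v = (g v - Λ.TtOn S (1, 0) g v) + (h v - Λ.TtOn S (0, 1) h v)) →
    f = 0


open Function Set in
lemma my_finsum_mem_neg {α : Type} (F : α → ℤ) (S : Set α) :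
    ∑ᶠ w ∈ S, (-F w) = -∑ᶠ w ∈ S, F w := by
  rw [finsum_mem_def, finsum_mem_def]
  have h : S.indicator (fun w => -F w) = fun w => -(S.indicator F w) := by
    have := Set.indicator_neg' S F
    simpa [Pi.neg_def] using this
  rw [h, finsum_neg_distrib]

open Function Set in
lemma my_finsum_eq_finsum_mem {α : Type} {F : α → ℤ} {S : Set α}
    (h : Function.support F ⊆ S) :
    ∑ᶠ w, F w = ∑ᶠ w ∈ S, F w := by
  rw [← finsum_mem_univ F]
  exact finsum_mem_inter_support_eq' F _ _ (fun x hx => by simp [h hx])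

lemma TwoGraph.adj_zero (Λ : TwoGraph) {H : Set Λ.V}
    (hher : ∀ p : Λ.P, Λ.r p ∈ H → Λ.s p ∈ H)
    (e : ℕ × ℕ) {w v : Λ.V} (hw : w ∈ H) (hv : v ∉ H) : Λ.adj e w v = 0 := by
  have : IsEmpty {p : Λ.P // Λ.r p = w ∧ Λ.s p = v ∧ Λ.d p = e} := by
    constructor
    rintro ⟨p, hr, hs, -⟩
    exact hv (hs ▸ hher p (hr ▸ hw))
  simp [TwoGraph.adj]

lemma TwoGraph.adj_ne_zero_exists (Λ : TwoGraph) {e : ℕ × ℕ} {w v : Λ.V}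
    (h : Λ.adj e w v ≠ 0) :
    ∃ p : Λ.P, Λ.r p = w ∧ Λ.s p = v ∧ Λ.d p = e := by
  by_contra hne
  push_neg at hne
  have : IsEmpty {p : Λ.P // Λ.r p = w ∧ Λ.s p = v ∧ Λ.d p = e} := by
    constructor; rintro ⟨p, hr, hs, hd⟩; exact hne p hr hs hd
  exact h (by simp [TwoGraph.adj])

lemma TwoGraph.support_TtOn_finite (Λ : TwoGraph) (S : Set Λ.V) (e : ℕ × ℕ)
    {a : Λ.V → ℤ} (ha : (Function.support a).Finite) :
    (Function.support (Λ.TtOn S e a)).Finite := by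
  have hsub : Function.support (Λ.TtOn S e a) ⊆
      ⋃ w ∈ Function.support a, Λ.s '' {p : Λ.P | Λ.r p = w ∧ Λ.d p = e} := by
    intro v hv
    simp only [Function.mem_support, TwoGraph.TtOn] at hv
    by_cases hvS : v ∈ S
    · rw [if_pos hvS] at hv
      obtain ⟨x, -, hx⟩ := exists_ne_zero_of_finsum_mem_ne_zero hv
      have hax : a x ≠ 0 := fun h0 => hx (by simp [h0])
      have hadj : Λ.adj e x v ≠ 0 := fun h0 => hx (by simp [h0])
      obtain ⟨p, hr, hs, hd⟩ := Λ.adj_ne_zero_exists hadj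
      exact Set.mem_biUnion hax ⟨p, ⟨hr, hd⟩, hs⟩
    · exact absurd (if_neg hvS) hv
  exact (ha.biUnion (fun w _ => ((Λ.rowFinite w e).image Λ.s))).subset hsub

lemma TwoGraph.TtOn_add (Λ : TwoGraph) (S : Set Λ.V) (e : ℕ × ℕ) {a b : Λ.V → ℤ}
    (ha : (Function.support a).Finite) (hb : (Function.support b).Finite) :
    ∀ v, Λ.TtOn S e (a + b) v = Λ.TtOn S e a v + Λ.TtOn S e b v := by
  intro v
  unfold TwoGraph.TtOn
  by_cases hv : v ∈ S
  · rw [if_pos hv, if_pos hv, if_pos hv,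
      ← finsum_mem_add_distrib' (f := fun w => (Λ.adj e w v : ℤ) * a w)
        (g := fun w => (Λ.adj e w v : ℤ) * b w)
        ((ha.subset (fun w hw => by
          simp only [Function.mem_support] at hw ⊢
          exact fun h0 => hw (by simp [h0]))).subset Set.inter_subset_right)
        ((hb.subset (fun w hw => by
          simp only [Function.mem_support] at hw ⊢
          exact fun h0 => hw (by simp [h0]))).subset Set.inter_subset_right)]
    exact finsum_mem_congr rfl (fun w _ => by simp [mul_add])
  · simp [if_neg hv]

lemma TwoGraph.TtOn_neg (Λ : TwoGraph) (S : Set Λ.V) (e : ℕ × ℕ) (a : Λ.V → ℤ) :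
    ∀ v, Λ.TtOn S e (-a) v = -Λ.TtOn S e a v := by
  intro v
  unfold TwoGraph.TtOn
  by_cases hv : v ∈ S
  · rw [if_pos hv, if_pos hv, ← my_finsum_mem_neg (fun w => (Λ.adj e w v : ℤ) * a w)]
    exact finsum_mem_congr rfl (fun w _ => by simp)
  · simp [if_neg hv]

lemma TwoGraph.Tt_add (Λ : TwoGraph) (e : ℕ × ℕ) {a b : Λ.V → ℤ}
    (ha : (Function.support a).Finite) (hb : (Function.support b).Finite) :
    ∀ v, Λ.Tt e (a + b) v = Λ.Tt e a v + Λ.Tt e b v := by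
  intro v
  unfold TwoGraph.Tt
  rw [← finsum_add_distrib (f := fun w => (Λ.adj e w v : ℤ) * a w)
      (g := fun w => (Λ.adj e w v : ℤ) * b w)
      (ha.subset (fun w hw => by
        simp only [Function.mem_support] at hw ⊢
        exact fun h0 => hw (by simp [h0])))
      (hb.subset (fun w hw => by
        simp only [Function.mem_support] at hw ⊢
        exact fun h0 => hw (by simp [h0])))]
  exact finsum_congr (fun w => by simp [mul_add])

lemma TwoGraph.Tt_eq_TtOn (Λ : TwoGraph) {H : Set Λ.V}
    (hher : ∀ p : Λ.P, Λ.r p ∈ H → Λ.s p ∈ H)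
    (e : ℕ × ℕ) {g : Λ.V → ℤ} (hg : Function.support g ⊆ H) :
    ∀ v, Λ.Tt e g v = Λ.TtOn H e g v := by
  intro v
  unfold TwoGraph.Tt TwoGraph.TtOn
  by_cases hv : v ∈ H
  · rw [if_pos hv]
    exact my_finsum_eq_finsum_mem (fun w hw => by
      simp only [Function.mem_support] at hw
      by_contra hwH
      exact hw (by simp [Function.notMem_support.mp (fun hs => hwH (hg hs))]))
  · rw [if_neg hv]
    apply finsum_eq_zero_of_forall_eq_zero
    intro w
    by_cases hw : w ∈ H
    · simp [Λ.adj_zero hher e hw hv]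
    · simp [Function.notMem_support.mp (fun hs => hw (hg hs))]

lemma TwoGraph.Tt_compl (Λ : TwoGraph) {H : Set Λ.V}
    (hher : ∀ p : Λ.P, Λ.r p ∈ H → Λ.s p ∈ H)
    (e : ℕ × ℕ) (g : Λ.V → ℤ) {v : Λ.V} (hv : v ∉ H) :
    Λ.Tt e g v = Λ.TtOn Hᶜ e (Hᶜ.indicator g) v := by
  unfold TwoGraph.Tt TwoGraph.TtOn
  rw [if_pos (Set.mem_compl hv)]
  rw [my_finsum_eq_finsum_mem (F := fun w => (Λ.adj e w v : ℤ) * g w) (S := Hᶜ)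
    (fun w hw => by
      simp only [Function.mem_support] at hw
      intro hwH
      exact hw (by simp [Λ.adj_zero hher e hwH hv]))]
  exact finsum_mem_congr rfl (fun w hw => by simp [Set.indicator_of_mem hw])

/-- suppose `H` is a saturated hereditary subset of `Λ⁰` such that
(a) the quotient graph `Λ \ ΛH` (the subgraph on `Λ⁰ \ H`) satisfies the matrix
condition, (b) `HΛ` satisfies the matrix condition, and (c) every `m ∈ ℤH` lying in
`ℕH + im(1 - A_{H,1}^t, 1 - A_{H,2}^t)` and in `im(1 - A₁^t) + im(1 - A₂^t)` (inside
`ℤΛ⁰`) already lies in `im(1 - A_{H,1}^t) + im(1 - A_{H,2}^t)`. Then `Λ` satisfies the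
matrix condition. -/
theorem stmt_13 (Λ : TwoGraph) (H : Set Λ.V)
    (hher : ∀ p : Λ.P, Λ.r p ∈ H → Λ.s p ∈ H)
    (hsat : ∀ v : Λ.V, (∃ n : ℕ × ℕ, ∀ p : Λ.P, Λ.r p = v → Λ.d p = n → Λ.s p ∈ H) → v ∈ H)
    (ha : MatrixConditionOn Λ Hᶜ)
    (hb : MatrixConditionOn Λ H)
    (hc : ∀ m : Λ.V → ℤ, (Function.support m).Finite → Function.support m ⊆ H →
      (∃ p g h : Λ.V → ℤ, (Function.support p).Finite ∧ Function.support p ⊆ H ∧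
        (∀ v, 0 ≤ p v) ∧
        (Function.support g).Finite ∧ Function.support g ⊆ H ∧
        (Function.support h).Finite ∧ Function.support h ⊆ H ∧
        ∀ v, m v = p v + (g v - Λ.TtOn H (1, 0) g v) + (h v - Λ.TtOn H (0, 1) h v)) →
      (∃ g h : Λ.V → ℤ, (Function.support g).Finite ∧ (Function.support h).Finite ∧
        ∀ v, m v = (g v - Λ.Tt (1, 0) g v) + (h v - Λ.Tt (0, 1) h v)) →
      ∃ g h : Λ.V → ℤ, (Function.support g).Finite ∧ Function.support g ⊆ H ∧
        (Function.support h).Finite ∧ Function.support h ⊆ H ∧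
        ∀ v, m v = (g v - Λ.TtOn H (1, 0) g v) + (h v - Λ.TtOn H (0, 1) h v)) :
    MatrixCondition Λ := by
  intro f hffin hfpos hex
  obtain ⟨g, h, hgfin, hhfin, heq⟩ := hex
  classical
  -- indicator decompositions
  set gc : Λ.V → ℤ := Hᶜ.indicator g with hgc_def
  set hc2 : Λ.V → ℤ := Hᶜ.indicator h with hhc2_def
  set gH : Λ.V → ℤ := H.indicator g with hgH_def
  set hH : Λ.V → ℤ := H.indicator h with hhH_def
  have hgcfin : (Function.support gc).Finite :=
    hgfin.subset (by rw [hgc_def, Set.support_indicator]; exact Set.inter_subset_right)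
  have hhcfin : (Function.support hc2).Finite :=
    hhfin.subset (by rw [hhc2_def, Set.support_indicator]; exact Set.inter_subset_right)
  have hgHfin : (Function.support gH).Finite :=
    hgfin.subset (by rw [hgH_def, Set.support_indicator]; exact Set.inter_subset_right)
  have hhHfin : (Function.support hH).Finite :=
    hhfin.subset (by rw [hhH_def, Set.support_indicator]; exact Set.inter_subset_right)
  have hgHsub : Function.support gH ⊆ H := by
    rw [hgH_def, Set.support_indicator]; exact Set.inter_subset_left
  have hhHsub : Function.support hH ⊆ H := by
    rw [hhH_def, Set.support_indicator]; exact Set.inter_subset_left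
  have hgdec : ∀ v, g v = gc v + gH v := by
    intro v
    by_cases hv : v ∈ H
    · simp [hgc_def, hgH_def, Set.indicator_of_mem hv, Set.indicator_of_notMem
        (by simpa using hv : v ∉ Hᶜ)]
    · simp [hgc_def, hgH_def, Set.indicator_of_mem (Set.mem_compl hv),
        Set.indicator_of_notMem hv]
  have hhdec : ∀ v, h v = hc2 v + hH v := by
    intro v
    by_cases hv : v ∈ H
    · simp [hhc2_def, hhH_def, Set.indicator_of_mem hv, Set.indicator_of_notMem
        (by simpa using hv : v ∉ Hᶜ)]
    · simp [hhc2_def, hhH_def, Set.indicator_of_mem (Set.mem_compl hv),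
        Set.indicator_of_notMem hv]
  -- Step 1: support f ⊆ H, via condition (a)
  have hfH : Function.support f ⊆ H := by
    have h0 : Hᶜ.indicator f = 0 := by
      apply ha (Hᶜ.indicator f)
      · exact hffin.subset (by rw [Set.support_indicator]; exact Set.inter_subset_right)
      · rw [Set.support_indicator]; exact Set.inter_subset_left
      · intro v
        by_cases hv : v ∈ Hᶜ
        · simpa [Set.indicator_of_mem hv] using hfpos v
        · simp [Set.indicator_of_notMem hv]
      · refine ⟨gc, hc2, hgcfin, ?_, hhcfin, ?_, ?_⟩
        · rw [hgc_def, Set.support_indicator]; exact Set.inter_subset_left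
        · rw [hhc2_def, Set.support_indicator]; exact Set.inter_subset_left
        · intro v
          by_cases hv : v ∈ H
          · have hvc : v ∉ Hᶜ := by simpa using hv
            simp [Set.indicator_of_notMem hvc, hgc_def, hhc2_def, TwoGraph.TtOn,
              if_neg hvc, hv]
          · have e1 := Λ.Tt_compl hher (1, 0) g hv
            have e2 := Λ.Tt_compl hher (0, 1) h hv
            have hvc : v ∈ Hᶜ := Set.mem_compl hv
            rw [Set.indicator_of_mem hvc]
            rw [hgc_def, hhc2_def] at *
            rw [show Hᶜ.indicator g v = g v from Set.indicator_of_mem hvc g,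
              show Hᶜ.indicator h v = h v from Set.indicator_of_mem hvc h,
              ← e1, ← e2]
            exact heq v
    intro v hv
    by_contra hvH
    apply Function.mem_support.mp hv
    have := congrFun h0 v
    simpa [Set.indicator_of_mem (Set.mem_compl hvH)] using this
  -- Step 2: define m and apply condition (c)
  set m : Λ.V → ℤ := fun v =>
    f v - (gH v - Λ.TtOn H (1, 0) gH v) - (hH v - Λ.TtOn H (0, 1) hH v) with hm_def
  have hTgHfin := Λ.support_TtOn_finite H (1, 0) hgHfin
  have hThHfin := Λ.support_TtOn_finite H (0, 1) hhHfin
  have hmfin : (Function.support m).Finite := by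
    apply Set.Finite.subset
      ((hffin.union (hgHfin.union hTgHfin)).union (hhHfin.union hThHfin))
    intro v hv
    by_contra hvU
    simp only [Set.mem_union, Function.mem_support, not_or, not_not] at hvU
    obtain ⟨⟨e1, e2, e3⟩, e4, e5⟩ := hvU
    exact Function.mem_support.mp hv (by simp [hm_def, e1, e2, e3, e4, e5])
  have hmsub : Function.support m ⊆ H := by
    intro v hv
    by_contra hvH
    apply Function.mem_support.mp hv
    have hf0 : f v = 0 := by
      by_contra hne; exact hvH (hfH hne)
    have hg0 : gH v = 0 := by rw [hgH_def]; exact Set.indicator_of_notMem hvH g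
    have hh0 : hH v = 0 := by rw [hhH_def]; exact Set.indicator_of_notMem hvH h
    have ht1 : Λ.TtOn H (1, 0) gH v = 0 := by
      simp [TwoGraph.TtOn, if_neg hvH]
    have ht2 : Λ.TtOn H (0, 1) hH v = 0 := by
      simp [TwoGraph.TtOn, if_neg hvH]
    simp [hm_def, hf0, hg0, hh0, ht1, ht2]
  have hmem1 : ∃ p g' h' : Λ.V → ℤ, (Function.support p).Finite ∧
      Function.support p ⊆ H ∧ (∀ v, 0 ≤ p v) ∧
      (Function.support g').Finite ∧ Function.support g' ⊆ H ∧
      (Function.support h').Finite ∧ Function.support h' ⊆ H ∧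
      ∀ v, m v = p v + (g' v - Λ.TtOn H (1, 0) g' v) +
        (h' v - Λ.TtOn H (0, 1) h' v) := by
    refine ⟨f, -gH, -hH, hffin, hfH, hfpos,
      (by rwa [Function.support_neg]), (by rwa [Function.support_neg]),
      (by rwa [Function.support_neg]), (by rwa [Function.support_neg]), ?_⟩
    intro v
    rw [Λ.TtOn_neg H (1, 0) gH v, Λ.TtOn_neg H (0, 1) hH v]
    simp only [hm_def, Pi.neg_apply]
    ring
  have hmem2 : ∃ g' h' : Λ.V → ℤ, (Function.support g').Finite ∧
      (Function.support h').Finite ∧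
      ∀ v, m v = (g' v - Λ.Tt (1, 0) g' v) + (h' v - Λ.Tt (0, 1) h' v) := by
    refine ⟨gc, hc2, hgcfin, hhcfin, ?_⟩
    intro v
    have hTg : Λ.Tt (1, 0) g v = Λ.Tt (1, 0) gc v + Λ.TtOn H (1, 0) gH v := by
      have hgeq : g = gc + gH := funext fun w => hgdec w
      rw [show Λ.Tt (1, 0) g v = Λ.Tt (1, 0) (gc + gH) v from by rw [← hgeq],
        Λ.Tt_add (1, 0) hgcfin hgHfin v, Λ.Tt_eq_TtOn hher (1, 0) hgHsub v]
    have hTh : Λ.Tt (0, 1) h v = Λ.Tt (0, 1) hc2 v + Λ.TtOn H (0, 1) hH v := by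
      have hheq : h = hc2 + hH := funext fun w => hhdec w
      rw [show Λ.Tt (0, 1) h v = Λ.Tt (0, 1) (hc2 + hH) v from by rw [← hheq],
        Λ.Tt_add (0, 1) hhcfin hhHfin v, Λ.Tt_eq_TtOn hher (0, 1) hhHsub v]
    have h1 := heq v
    have h2 := hgdec v
    have h3 := hhdec v
    simp only [hm_def]
    linarith [h1, h2, h3, hTg, hTh]
  obtain ⟨g', h', hg'fin, hg'sub, hh'fin, hh'sub, hmeq⟩ := hc m hmfin hmsub hmem1 hmem2
  -- Step 3: apply condition (b) to f
  apply hb f hffin hfH hfpos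
  have hsg : Function.support (g' + gH) ⊆ Function.support g' ∪ Function.support gH :=
    fun v hv => by
      by_contra hcon
      simp only [Set.mem_union, Function.mem_support, not_or, not_not] at hcon
      exact Function.mem_support.mp hv (by simp [Pi.add_apply, hcon.1, hcon.2])
  have hsh : Function.support (h' + hH) ⊆ Function.support h' ∪ Function.support hH :=
    fun v hv => by
      by_contra hcon
      simp only [Set.mem_union, Function.mem_support, not_or, not_not] at hcon
      exact Function.mem_support.mp hv (by simp [Pi.add_apply, hcon.1, hcon.2])
  refine ⟨g' + gH, h' + hH, (hg'fin.union hgHfin).subset hsg,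
    ?_, (hh'fin.union hhHfin).subset hsh, ?_, ?_⟩
  · exact Set.Subset.trans hsg (Set.union_subset hg'sub hgHsub)
  · exact Set.Subset.trans hsh (Set.union_subset hh'sub hhHsub)
  · intro v
    rw [Λ.TtOn_add H (1, 0) hg'fin hgHfin v, Λ.TtOn_add H (0, 1) hh'fin hhHfin v]
    have h1 := hmeq v
    simp only [hm_def] at h1
    simp only [Pi.add_apply]
    linarith [h1]
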